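/- For every positive integer r, there exist rational numbers d_r, d_{r+1}, ..., d_{2r+1} with d_{2r+1} = 2/(r+1) and d_{2r} = 0 such that for every natural number n, S_r(n)^2 = \sum_{i=r}^{2r+1} d_i * S_i(n). -/

import Mathlib

open Finset

/-- `S k n = ∑_{m=1}^n m^k` as a rational number. -/
def S (k n : ℕ) : ℚ := ∑ m ∈ Finset.Icc 1 n, (m : ℚ) ^ k

lemma S_eval (r n : ℕ) :
    S r n = ∑ k ∈ range (r + 1),
      bernoulli' k * ((r + 1).choose k) * (n : ℚ) ^ (r + 1 - k) / (r + 1) := by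
  rw [S, ← Finset.Ico_add_one_right_eq_Icc]
  exact sum_Ico_pow n r

lemma key (r : ℕ) (m : ℕ) :
    ∑ i ∈ Finset.Icc (r + 1) (2 * r + 1),
      (2 * bernoulli' (2 * r + 1 - i) * ((r + 1).choose (2 * r + 1 - i)) / (r + 1))
        * (m : ℚ) ^ i
      = 2 * (m : ℚ) ^ r * S r m := by
  rw [S_eval, mul_sum]
  rw [← Finset.Ico_add_one_right_eq_Icc, Finset.sum_Ico_eq_sum_range]
  have h2 : 2 * r + 1 + 1 - (r + 1) = r + 1 := by omega
  rw [h2]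
  rw [← Finset.sum_range_reflect (fun k => 2 * (↑m:ℚ) ^ r *
      (bernoulli' k * ((r + 1).choose k) * (m : ℚ) ^ (r + 1 - k) / (r + 1))) (r+1)]
  apply Finset.sum_congr rfl
  intro j hj
  rw [Finset.mem_range] at hj
  have h3 : 2 * r + 1 - (r + 1 + j) = r - j := by omega
  have h4 : r + 1 - 1 - j = r - j := by omega
  have h5 : r + 1 - (r - j) = j + 1 := by omega
  rw [h3, h4, h5]
  have h6 : (m : ℚ) ^ (r + 1 + j) = (m : ℚ) ^ r * (m : ℚ) ^ (j + 1) := by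
    rw [← pow_add]; ring_nf
  rw [h6]
  ring

theorem sq_power_sum_expansion (r : ℕ) (hr : 0 < r) :
    ∃ d : ℕ → ℚ,
      d (2 * r + 1) = 2 / ((r : ℚ) + 1) ∧
      d (2 * r) = 0 ∧
      ∀ n : ℕ, (S r n) ^ 2 = ∑ i ∈ Finset.Icc r (2 * r + 1), d i * S i n := by
  refine ⟨fun i => if i = 2 * r then 0 else if i ∈ Finset.Icc (r+1) (2*r+1) then
      2 * bernoulli' (2 * r + 1 - i) * ((r + 1).choose (2 * r + 1 - i)) / (r + 1)
    else 0, ?_, ?_, ?_⟩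
  · have h1 : ¬ (2 * r + 1 = 2 * r) := by omega
    have h2 : 2 * r + 1 ∈ Finset.Icc (r+1) (2*r+1) := by
      rw [Finset.mem_Icc]; omega
    simp only [h1, if_false, h2, if_true]
    norm_num
  · simp
  · set d : ℕ → ℚ := fun i => if i = 2 * r then 0 else if i ∈ Finset.Icc (r+1) (2*r+1) then
      2 * bernoulli' (2 * r + 1 - i) * ((r + 1).choose (2 * r + 1 - i)) / (r + 1)
    else 0 with hd
    have step : ∀ m : ℕ, ∑ i ∈ Finset.Icc r (2 * r + 1), d i * (m : ℚ) ^ i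
        = 2 * (m : ℚ) ^ r * S r m - (m : ℚ) ^ (2 * r) := by
      intro m
      have hins : Finset.Icc r (2 * r + 1)
          = insert r (Finset.Icc (r+1) (2*r+1)) := by
        rw [Finset.Icc_eq_cons_Ioc (by omega), Finset.cons_eq_insert,
          Finset.Icc_add_one_left_eq_Ioc]
      have hrnot : r ∉ Finset.Icc (r+1) (2*r+1) := by
        rw [Finset.mem_Icc]; omega
      rw [hins, Finset.sum_insert hrnot]
      have hdr : d r = 0 := by
        rw [hd]
        simp only [hrnot, if_false]
        have : ¬ (r = 2 * r) := by omega
        simp [this]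
      rw [hdr, zero_mul, zero_add]
      have split : ∀ i ∈ Finset.Icc (r+1) (2*r+1), d i * (m : ℚ) ^ i
          = (2 * bernoulli' (2 * r + 1 - i) * ((r + 1).choose (2 * r + 1 - i)) / (r + 1))
              * (m : ℚ) ^ i
            - (if i = 2 * r then (m : ℚ) ^ (2 * r) else 0) := by
        intro i hi
        rw [hd]
        simp only [hi, if_true]
        by_cases h : i = 2 * r
        · subst h
          simp only [if_true]
          have h1 : 2 * r + 1 - 2 * r = 1 := by omega
          rw [h1, bernoulli'_one, Nat.choose_one_right]
          have : ((r:ℚ) + 1) ≠ 0 := by positivity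
          field_simp
          simp
        · simp [h]
      rw [Finset.sum_congr rfl split, Finset.sum_sub_distrib, key]
      congr 1
      rw [Finset.sum_ite_eq' (Finset.Icc (r+1) (2*r+1)) (2*r) (fun _ => (m:ℚ) ^ (2*r))]
      have : 2 * r ∈ Finset.Icc (r+1) (2*r+1) := by rw [Finset.mem_Icc]; omega
      simp [this]
    intro n
    induction n with
    | zero => simp [S]
    | succ n ih =>
      have hS : ∀ k : ℕ, S k (n + 1) = S k n + ((n:ℚ) + 1) ^ k := by
        intro k
        rw [S, S, Finset.sum_Icc_succ_top (by omega)]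
        push_cast
        ring
      rw [hS r]
      have expand : ∀ i ∈ Finset.Icc r (2 * r + 1), d i * S i (n + 1)
          = d i * S i n + d i * ((n:ℚ) + 1) ^ i := by
        intro i _
        rw [hS i]; ring
      rw [Finset.sum_congr rfl expand, Finset.sum_add_distrib, ← ih]
      have hstep := step (n + 1)
      push_cast at hstep
      rw [hstep, hS r]
      have hpow : ((n:ℚ) + 1) ^ (2 * r) = ((n:ℚ) + 1) ^ r * ((n:ℚ) + 1) ^ r := by
        rw [← pow_add, two_mul]
      rw [hpow]
      ring
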